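/- Let r be a positive integer and Γ a finite connected graph with first Betti number h^1(Γ), with legs carrying residues a_i ∈ ℤ/rℤ. Then the number of functions w from half-edges of Γ to ℤ/rℤ satisfying (R1) w(leg i) = a_i, (R2) w(h) + w(h') = 0 for each edge (h,h'), and (R3) the sum of w over half-edges at each vertex is 0 mod r, is r^{h^1(Γ)} if Σ_i a_i ≡ 0 (mod r), and 0 otherwise. -/

import Mathlib

open Finset

section CWF

variable {V E : Type} [Fintype V] [Fintype E] [DecidableEq V] {r : ℕ}

/-- The boundary map sending an edge-weighting to its vertex sums. -/
def cwfPhi (ends : E → V × V) : (E → ZMod r) →ₗ[ZMod r] (V → ZMod r) where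
  toFun w := fun v => ∑ e : E, ((if (ends e).1 = v then w e else 0)
      + (if (ends e).2 = v then -(w e) else 0))
  map_add' w w' := by
    funext v
    simp only [Pi.add_apply]
    rw [← Finset.sum_add_distrib]
    refine Finset.sum_congr rfl fun e _ => ?_
    split_ifs <;> ring
  map_smul' c w := by
    funext v
    simp only [Pi.smul_apply, smul_eq_mul, RingHom.id_apply]
    rw [Finset.mul_sum]
    refine Finset.sum_congr rfl fun e _ => ?_
    split_ifs <;> ring

/-- The total-sum functional on vertex functions. -/
def cwfSum : (V → ZMod r) →ₗ[ZMod r] ZMod r where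
  toFun f := ∑ v : V, f v
  map_add' f g := by
    rw [← Finset.sum_add_distrib]
    exact Finset.sum_congr rfl fun v _ => rfl
  map_smul' c f := by
    simp only [Pi.smul_apply, smul_eq_mul, RingHom.id_apply]
    rw [Finset.mul_sum]

lemma cwfSum_phi (ends : E → V × V) (w : E → ZMod r) :
    cwfSum (cwfPhi ends w) = 0 := by
  simp only [cwfPhi, cwfSum, LinearMap.coe_mk, AddHom.coe_mk]
  rw [Finset.sum_comm]
  refine Finset.sum_eq_zero fun e _ => ?_
  rw [Finset.sum_add_distrib, Finset.sum_ite_eq, Finset.sum_ite_eq]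
  simp

lemma cwfPhi_single [DecidableEq E] (ends : E → V × V) (e : E) :
    cwfPhi ends (Pi.single e (1 : ZMod r))
      = Pi.single (ends e).1 1 - Pi.single (ends e).2 1 := by
  funext v
  simp only [cwfPhi, LinearMap.coe_mk, AddHom.coe_mk, Pi.sub_apply]
  rw [Finset.sum_eq_single e]
  · simp only [Pi.single_eq_same, Pi.single_apply, eq_comm]
    split_ifs <;> ring
  · intro e' _ hne
    simp [Pi.single_eq_of_ne hne]
  · simp

lemma cwf_walk_mem (ends : E → V × V) {u v : V}
    (p : (SimpleGraph.fromRel (fun u v => ∃ e, ends e = (u, v))).Walk u v) :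
    (Pi.single u 1 - Pi.single v 1 : V → ZMod r) ∈ LinearMap.range (cwfPhi ends) := by
  classical
  induction p with
  | nil => exact ⟨0, by rw [map_zero]; exact (sub_self _).symm⟩
  | @cons u x v hadj p ih =>
    have hux : (Pi.single u 1 - Pi.single x 1 : V → ZMod r)
        ∈ LinearMap.range (cwfPhi ends) := by
      rw [SimpleGraph.fromRel_adj] at hadj
      obtain ⟨-, ⟨e, he⟩ | ⟨e, he⟩⟩ := hadj
      · exact ⟨Pi.single e 1, by rw [cwfPhi_single, he]⟩
      · refine ⟨-Pi.single e 1, ?_⟩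
        rw [map_neg, cwfPhi_single, he]
        abel
    have h3 : (Pi.single u 1 - Pi.single v 1 : V → ZMod r)
        = (Pi.single u 1 - Pi.single x 1) + (Pi.single x 1 - Pi.single v 1) := by abel
    rw [h3]
    exact add_mem hux ih

lemma cwf_range (ends : E → V × V)
    (hconn : (SimpleGraph.fromRel (fun u v => ∃ e, ends e = (u, v))).Connected) :
    LinearMap.range (cwfPhi (r := r) ends) = LinearMap.ker cwfSum := by
  apply le_antisymm
  · rintro _ ⟨w, rfl⟩
    exact cwfSum_phi ends w
  · intro f hf
    obtain ⟨v0⟩ := hconn.nonempty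
    have hf0 : ∑ v : V, f v = 0 := hf
    have hrepr : f = ∑ v : V, f v • (Pi.single v 1 - Pi.single v0 1) := by
      funext u
      simp only [Finset.sum_apply, Pi.smul_apply, Pi.sub_apply, smul_eq_mul, mul_sub,
        Finset.sum_sub_distrib, Pi.single_apply, mul_ite, mul_one, mul_zero]
      rw [Finset.sum_ite_eq Finset.univ u f]
      by_cases h : u = v0 <;> simp [h, hf0]
    rw [hrepr]
    refine Submodule.sum_mem _ fun v _ => Submodule.smul_mem _ _ ?_
    obtain ⟨p⟩ := hconn.preconnected v v0
    exact cwf_walk_mem ends p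

end CWF

/-- Counting weight functions mod `r` on a connected graph: the number of
`w : E → ℤ/r` (assigning a weight to each oriented edge; the opposite half-edge
carries the negative, which is condition (R2)) such that at each vertex the sum of
incident half-edge weights plus leg residues vanishes (R3), with leg residues fixed
to `a_i` (R1), is `r^{h¹(Γ)}` if `Σ a_i ≡ 0 (mod r)` and `0` otherwise, where
`h¹(Γ) = #E - #V + 1`. -/
theorem count_weight_functions {V E ι : Type} [Fintype V] [Fintype E] [Fintype ι]
    [DecidableEq V] (r : ℕ) (hr : 0 < r)
    (ends : E → V × V)
    (hconn : (SimpleGraph.fromRel (fun u v => ∃ e, ends e = (u, v))).Connected)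
    (leg : ι → V) (a : ι → ZMod r) :
    Nat.card {w : E → ZMod r //
        ∀ v : V, (∑ e : E, ((if (ends e).1 = v then w e else 0)
              + (if (ends e).2 = v then -(w e) else 0)))
            + ∑ i : ι, (if leg i = v then a i else 0) = 0}
      = if (∑ i : ι, a i) = 0
        then r ^ (Fintype.card E + 1 - Fintype.card V) else 0 := by
  classical
  haveI : NeZero r := ⟨hr.ne'⟩
  set c : V → ZMod r := fun v => ∑ i : ι, (if leg i = v then a i else 0) with hc
  -- rewrite the condition via cwfPhi
  have hcond : ∀ w : E → ZMod r,
      (∀ v : V, (∑ e : E, ((if (ends e).1 = v then w e else 0)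
              + (if (ends e).2 = v then -(w e) else 0)))
            + ∑ i : ι, (if leg i = v then a i else 0) = 0)
      ↔ cwfPhi ends w = -c := by
    intro w
    rw [funext_iff]
    refine forall_congr' fun v => ?_
    simp only [cwfPhi, LinearMap.coe_mk, AddHom.coe_mk, Pi.neg_apply, hc]
    constructor
    · intro h; linear_combination h
    · intro h; linear_combination h
  have hcsum : cwfSum c = ∑ i : ι, a i := by
    simp only [cwfSum, LinearMap.coe_mk, AddHom.coe_mk, hc]
    rw [Finset.sum_comm]
    exact Finset.sum_congr rfl fun i _ => by rw [Finset.sum_ite_eq]; simp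
  have hequiv : {w : E → ZMod r //
        ∀ v : V, (∑ e : E, ((if (ends e).1 = v then w e else 0)
              + (if (ends e).2 = v then -(w e) else 0)))
            + ∑ i : ι, (if leg i = v then a i else 0) = 0}
      ≃ {w : E → ZMod r // cwfPhi ends w = -c} :=
    Equiv.subtypeEquivRight hcond
  rw [Nat.card_congr hequiv]
  by_cases hsa : (∑ i : ι, a i) = 0
  · rw [if_pos hsa]
    -- -c lies in the range of cwfPhi
    have hmem : -c ∈ LinearMap.range (cwfPhi (r := r) ends) := by
      rw [cwf_range ends hconn]
      simp [LinearMap.mem_ker, hcsum, hsa]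
    obtain ⟨w0, hw0⟩ := hmem
    -- fiber ≃ kernel
    have e2 : {w : E → ZMod r // cwfPhi ends w = -c}
        ≃ LinearMap.ker (cwfPhi (r := r) ends) :=
      { toFun := fun w => ⟨w.1 - w0, by
          simp [LinearMap.mem_ker, map_sub, w.2, hw0]⟩
        invFun := fun u => ⟨u.1 + w0, by
          have := u.2
          rw [LinearMap.mem_ker] at this
          simp [map_add, this, hw0]⟩
        left_inv := fun w => by simp
        right_inv := fun u => by simp }
    rw [Nat.card_congr e2]
    -- now card computations
    obtain ⟨v0⟩ := hconn.nonempty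
    have hVpos : 1 ≤ Fintype.card V := Fintype.card_pos_iff.mpr ⟨v0⟩
    have hsumsurj : Function.Surjective (cwfSum (V := V) (r := r)) := by
      intro x
      refine ⟨Pi.single v0 x, ?_⟩
      simp only [cwfSum, LinearMap.coe_mk, AddHom.coe_mk]
      rw [Finset.sum_congr rfl (fun v _ => Pi.single_apply v0 x v)]
      rw [Finset.sum_ite_eq' Finset.univ v0 (fun _ => x)]
      simp
    have hcardZ : Nat.card (ZMod r) = r := Nat.card_zmod r
    have hcardV : Nat.card (V → ZMod r) = r ^ Fintype.card V := by
      rw [Nat.card_fun, hcardZ, Nat.card_eq_fintype_card]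
    have hcardE : Nat.card (E → ZMod r) = r ^ Fintype.card E := by
      rw [Nat.card_fun, hcardZ, Nat.card_eq_fintype_card]
    -- card of ker cwfSum
    have h1 : Nat.card (V → ZMod r)
        = Nat.card (LinearMap.ker (cwfSum (V := V) (r := r)))
          * Nat.card ((V → ZMod r) ⧸ LinearMap.ker (cwfSum (V := V) (r := r))) :=
      Submodule.card_eq_card_quotient_mul_card _
    have hq1 : Nat.card ((V → ZMod r) ⧸ LinearMap.ker (cwfSum (V := V) (r := r))) = r := by
      have e := ((cwfSum (V := V) (r := r)).quotKerEquivOfSurjective hsumsurj).toEquiv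
      rw [Nat.card_congr e, hcardZ]
    have h2 : Nat.card (E → ZMod r)
        = Nat.card (LinearMap.ker (cwfPhi (r := r) ends))
          * Nat.card ((E → ZMod r) ⧸ LinearMap.ker (cwfPhi (r := r) ends)) :=
      Submodule.card_eq_card_quotient_mul_card _
    have hq2 : Nat.card ((E → ZMod r) ⧸ LinearMap.ker (cwfPhi (r := r) ends))
        = Nat.card (LinearMap.ker (cwfSum (V := V) (r := r))) := by
      have e := (cwfPhi (r := r) ends).quotKerEquivRange.toEquiv
      rw [Nat.card_congr e, cwf_range ends hconn]
    set A := Nat.card (LinearMap.ker (cwfPhi (r := r) ends)) with hA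
    set K := Nat.card (LinearMap.ker (cwfSum (V := V) (r := r))) with hK
    have hKr : K * r = r ^ Fintype.card V := by
      rw [← hcardV, h1, hq1]
    have hAK : A * K = r ^ Fintype.card E := by
      rw [← hcardE, h2, hq2]
    -- conclude A = r ^ (|E| + 1 - |V|)
    have key : A * r ^ Fintype.card V = r ^ (Fintype.card E + 1) := by
      rw [← hKr, pow_succ, ← hAK]; ring
    rcases eq_or_lt_of_le (Nat.succ_le_of_lt hr) with hr1 | hr2
    · -- r = 1
      have : r = 1 := hr1.symm
      subst this
      simp only [one_pow] at key ⊢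
      have := key
      omega
    · -- 2 ≤ r
      have hVle : Fintype.card V ≤ Fintype.card E + 1 := by
        have hdvd : r ^ Fintype.card V ∣ r ^ (Fintype.card E + 1) :=
          Dvd.intro_left A key
        exact (Nat.pow_dvd_pow_iff_le_right hr2).mp hdvd
      have : A * r ^ Fintype.card V
          = r ^ (Fintype.card E + 1 - Fintype.card V) * r ^ Fintype.card V := by
        rw [key, ← pow_add, Nat.sub_add_cancel hVle]
      exact Nat.eq_of_mul_eq_mul_right (Nat.pow_pos hr) this
  · rw [if_neg hsa]
    rw [Nat.card_eq_zero]
    left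
    constructor
    intro ⟨w, hw⟩
    apply hsa
    have := congrArg (cwfSum (V := V) (r := r)) hw
    rw [cwfSum_phi, map_neg, hcsum] at this
    exact neg_eq_zero.mp this.symm
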